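/- For real p, q ≥ 0, Re(c) > Re(b) > 0, and real x with |x| < 1, the (p,q)-Gauss hypergeometric series F_{p,q}(a,b;c;x) = Σ_{n≥0} [B_{p,q}(b+n, c−b)/B(b, c−b)] (a)_n xⁿ/n! admits the integral representation F_{p,q}(a,b;c;x) = (1/B(b, c−b)) ∫₀¹ t^{b−1} (1−t)^{c−b−1} (1−xt)^{−a} exp(−p/t − q/(1−t)) dt. -/

import Mathlib

open MeasureTheory

/-- The (p,q)-extended beta function. -/
noncomputable def extBeta (p q x y : ℂ) : ℂ :=
  ∫ t in (0:ℝ)..1, (t:ℂ) ^ (x - 1) * ((1:ℂ) - t) ^ (y - 1) *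
    Complex.exp (-p / t - q / (1 - t))

/-- The Pochhammer symbol (x)_n. -/
noncomputable def poch (x : ℂ) (n : ℕ) : ℂ := (ascPochhammer ℂ n).eval x

/-- The (p,q)-extended Gauss hypergeometric function, defined by its series. -/
noncomputable def Fpq (p q a b c x : ℂ) : ℂ :=
  ∑' n : ℕ, extBeta p q (b + n) (c - b) / Complex.betaIntegral b (c - b) *
    poch a n * x ^ n / n.factorial

open Filter Topology

section aux


lemma pochBound (a : ℂ) (n : ℕ) :
    ‖(ascPochhammer ℂ n).eval a‖ ≤ (ascPochhammer ℝ n).eval (‖a‖ + 1) := by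
  induction n with
  | zero => simp
  | succ n ih =>
    rw [ascPochhammer_succ_eval, ascPochhammer_succ_eval, norm_mul]
    have h1 : ‖(a + (n:ℂ))‖ ≤ ‖a‖ + 1 + n := by
      calc ‖a + (n:ℂ)‖ ≤ ‖a‖ + ‖(n:ℂ)‖ := norm_add_le _ _
        _ = ‖a‖ + n := by simp
        _ ≤ ‖a‖ + 1 + n := by linarith
    have h0 : (0:ℝ) < (ascPochhammer ℝ n).eval (‖a‖ + 1) :=
      ascPochhammer_pos n _ (by positivity)
    exact mul_le_mul ih h1 (norm_nonneg _) h0.le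

lemma summable_master {M r : ℝ} (hM : 0 < M) (hr0 : 0 ≤ r) (hr1 : r < 1) :
    Summable (fun n : ℕ => ((n:ℝ) + 1) * ((ascPochhammer ℝ n).eval M / n.factorial) * r ^ n) := by
  rcases eq_or_lt_of_le hr0 with h0 | h0
  · apply summable_of_ne_finset_zero (s := {0})
    intro n hn
    have hn' : n ≠ 0 := by simpa using hn
    simp [← h0, zero_pow hn']
  · set f : ℕ → ℝ := fun n => ((n:ℝ) + 1) * ((ascPochhammer ℝ n).eval M / n.factorial) * r ^ n
      with hf
    have hfpos : ∀ n, 0 < f n := by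
      intro n
      have h1 : 0 < (ascPochhammer ℝ n).eval M := ascPochhammer_pos n M hM
      have h2 : (0:ℝ) < n.factorial := by exact_mod_cast n.factorial_pos
      positivity
    apply summable_of_ratio_test_tendsto_lt_one hr1
      (Eventually.of_forall fun n => (hfpos n).ne')
    have hfq : ∀ n : ℕ, ‖f (n + 1)‖ / ‖f n‖
        = (1 + 1 / ((n:ℝ) + 1)) * (1 + (M - 1) * (1 / ((n:ℝ) + 1))) * r := by
      intro n
      have h1 : 0 < (ascPochhammer ℝ n).eval M := ascPochhammer_pos n M hM
      have h2 : (0:ℝ) < n.factorial := by exact_mod_cast n.factorial_pos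
      have h3 : ((n:ℝ) + 1) ≠ 0 := by positivity
      rw [Real.norm_eq_abs, Real.norm_eq_abs, abs_of_pos (hfpos _), abs_of_pos (hfpos _), hf]
      simp only
      rw [ascPochhammer_succ_eval, Nat.factorial_succ]
      push_cast
      rw [pow_succ]
      field_simp
      ring
    rw [funext hfq]
    have T := tendsto_one_div_add_atTop_nhds_zero_nat (𝕜 := ℝ)
    have := ((tendsto_const_nhds (x := (1:ℝ)) (f := atTop)).add T).mul
      ((tendsto_const_nhds (x := (1:ℝ)) (f := atTop)).add (T.const_mul (M - 1)))
    have := this.mul_const r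
    simpa using this

lemma hasSum_one_sub_cpow (a : ℂ) {s : ℝ} (hs : |s| < 1) :
    HasSum (fun n : ℕ => poch a n * (s:ℝ) ^ n / n.factorial) (((1:ℂ) - (s:ℝ)) ^ (-a)) := by
  set M : ℝ := ‖a‖ + 1 with hM
  have hM0 : 0 < M := by positivity
  set r : ℝ := (1 + |s|) / 2 with hrdef
  have habs : 0 ≤ |s| := abs_nonneg s
  have hr0 : 0 < r := by rw [hrdef]; linarith
  have hsr : |s| < r := by rw [hrdef]; linarith
  have hr1 : r < 1 := by rw [hrdef]; linarith
  have hmaster := summable_master hM0 hr0.le hr1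
  set P : ℕ → ℝ := fun n => (ascPochhammer ℝ n).eval M with hP
  have hPpos : ∀ n, 0 < P n := fun n => ascPochhammer_pos n M hM0
  set c : ℕ → ℂ := fun n => poch a n / n.factorial with hc
  have hcnorm : ∀ n, ‖c n‖ ≤ P n / n.factorial := by
    intro n
    rw [hc]
    simp only [norm_div, Complex.norm_natCast]
    gcongr
    exact pochBound a n
  -- summability of the series at any |y| ≤ r
  have hsum_c : ∀ y : ℝ, |y| ≤ r → Summable (fun n => c n * (y:ℂ) ^ n) := by
    intro y hy
    apply Summable.of_norm_bounded hmaster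
    intro n
    rw [norm_mul, norm_pow, Complex.norm_real, Real.norm_eq_abs]
    have h1 : ‖c n‖ * |y| ^ n ≤ P n / n.factorial * r ^ n := by
      gcongr
      · exact (norm_nonneg _).trans (hcnorm n)
      · exact hcnorm n
    have h2 : P n / n.factorial * r ^ n ≤ ((n:ℝ) + 1) * (P n / n.factorial) * r ^ n := by
      have hnn : (0:ℝ) ≤ P n / n.factorial * r ^ n := by
        have := (hPpos n).le
        positivity
      nlinarith [hnn]
    linarith
  -- summability of n * c n * y^n
  have hsum_nc : ∀ y : ℝ, |y| ≤ r → Summable (fun n : ℕ => (n:ℂ) * (c n * (y:ℂ) ^ n)) := by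
    intro y hy
    apply Summable.of_norm_bounded hmaster
    intro n
    rw [norm_mul, norm_mul, norm_pow, Complex.norm_real, Real.norm_eq_abs,
      Complex.norm_natCast]
    have hPn : (0:ℝ) ≤ P n / n.factorial := div_nonneg (hPpos n).le (Nat.cast_nonneg _)
    have h1 : (n:ℝ) * (‖c n‖ * |y| ^ n) ≤ ((n:ℝ) + 1) * (P n / n.factorial * r ^ n) := by
      gcongr <;> first
        | exact (norm_nonneg _).trans (hcnorm n)
        | exact hcnorm n
        | exact hy
        | exact hPn
        | linarith [(Nat.cast_nonneg n : (0:ℝ) ≤ n)]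
        | positivity
    calc (n:ℝ) * (‖c n‖ * |y| ^ n) ≤ ((n:ℝ) + 1) * (P n / n.factorial * r ^ n) := h1
      _ = ((n:ℝ) + 1) * (P n / n.factorial) * r ^ n := by ring
  -- the derivative bound series
  set u : ℕ → ℝ := fun n => ‖c n‖ * ((n:ℝ) * r ^ (n - 1)) with hu
  have hsum_u : Summable u := by
    refine Summable.of_nonneg_of_le (fun n => ?_) (fun n => ?_) (hmaster.mul_left (1 / r))
    · simp only [hu]
      positivity
    cases n with
    | zero =>
      have := (hPpos 0).le
      simp [hu]
      positivity
    | succ m =>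
      rw [hu]
      simp only [Nat.add_sub_cancel]
      have h1 : ‖c (m+1)‖ * (((m:ℝ)+1) * r ^ m)
          ≤ (P (m+1) / (m+1).factorial) * (((m:ℝ)+2) * r ^ m) := by
        gcongr
        · exact (norm_nonneg _).trans (hcnorm (m+1))
        · exact hcnorm (m+1)
        · linarith
      have h2 : (1 / r) * (((m:ℝ)+1+1) * (P (m+1) / (m+1).factorial) * r ^ (m+1))
          = (P (m+1) / (m+1).factorial) * (((m:ℝ)+2) * r ^ m) := by
        rw [pow_succ]
        field_simp
        ring
      push_cast at h1 h2 ⊢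
      rw [h2]
      convert h1 using 2
  -- the functions and their derivatives
  set t : Set ℝ := Set.Ioo (-r) r with htdef
  have ht : IsOpen t := isOpen_Ioo
  have htc : IsPreconnected t := (convex_Ioo (-r) r).isPreconnected
  have h0t : (0:ℝ) ∈ t := ⟨by linarith, hr0⟩
  set g : ℕ → ℝ → ℂ := fun n y => c n * (y:ℂ) ^ n with hg
  set g' : ℕ → ℝ → ℂ := fun n y => c n * ((n:ℂ) * (y:ℂ) ^ (n - 1)) with hg'
  have hgderiv : ∀ n : ℕ, ∀ y : ℝ, y ∈ t → HasDerivAt (g n) (g' n y) y := by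
    intro n y _
    exact ((hasDerivAt_pow n ((y:ℝ):ℂ)).comp_ofReal).const_mul (c n)
  have hgbound : ∀ n : ℕ, ∀ y : ℝ, y ∈ t → ‖g' n y‖ ≤ u n := by
    intro n y hy
    have hyr : |y| ≤ r := (abs_lt.mpr ⟨hy.1, hy.2⟩).le
    rw [hg', hu]
    simp only [norm_mul, Complex.norm_natCast, norm_pow, Complex.norm_real, Real.norm_eq_abs]
    gcongr
  have key : ∀ y ∈ t, HasDerivAt (fun z => ∑' n, g n z) (∑' n, g' n y) y := by
    intro y hy
    exact hasDerivAt_tsum_of_isPreconnected hsum_u ht htc hgderiv hgbound h0t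
      (hsum_c 0 (by simp [hr0.le])) hy
  set f : ℝ → ℂ := fun y => ∑' n, g n y with hf
  -- the ODE
  have ode : ∀ y ∈ t, ((1:ℂ) - (y:ℝ)) * (∑' n, g' n y) = a * f y := by
    intro y hy
    have hyr : |y| ≤ r := (abs_lt.mpr ⟨hy.1, hy.2⟩).le
    have hgs : Summable (fun n => g' n y) :=
      Summable.of_norm_bounded hsum_u (fun n => hgbound n y hy)
    have hrec : ∀ n : ℕ, g' (n+1) y = a * g n y + (n:ℂ) * g n y := by
      intro n
      have hfac : ((n.factorial : ℂ)) ≠ 0 := Nat.cast_ne_zero.mpr n.factorial_ne_zero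
      have hsucc : ((n:ℂ) + 1) ≠ 0 := by
        exact_mod_cast (Nat.cast_ne_zero (R := ℂ)).mpr (Nat.succ_ne_zero n)
      simp only [hg', hg, hc, poch, Nat.add_sub_cancel]
      rw [ascPochhammer_succ_eval, Nat.factorial_succ]
      push_cast
      field_simp
    have hSa : Summable (fun n => a * g n y) := by
      simp only [hg]
      exact (hsum_c y hyr).mul_left a
    have hSn : Summable (fun n : ℕ => (n:ℂ) * g n y) := hsum_nc y hyr
    have h1 : ∑' n, g' n y = ∑' n : ℕ, (a * g n y + (n:ℂ) * g n y) := by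
      rw [Summable.tsum_eq_zero_add hgs]
      simp only [hg']
      rw [show c 0 * ((0:ℕ) * ((y:ℂ)) ^ (0 - 1)) = 0 by simp, zero_add]
      exact tsum_congr fun n => hrec n
    have h2 : ∑' n, g' n y = a * f y + ∑' n : ℕ, (n:ℂ) * g n y := by
      rw [h1, Summable.tsum_add hSa hSn, hf, tsum_mul_left]
    have h3 : (y:ℂ) * ∑' n, g' n y = ∑' n : ℕ, (n:ℂ) * g n y := by
      rw [← tsum_mul_left]
      refine tsum_congr fun n => ?_
      cases n with
      | zero => simp [hg', hg]
      | succ m =>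
        simp only [hg', hg, Nat.add_sub_cancel]
        push_cast
        ring
    rw [sub_mul, one_mul, h3, h2]
    ring
  -- the constant function
  set φ : ℝ → ℂ := fun y => f y * ((1:ℂ) - (y:ℝ)) ^ a with hφdef
  have hφ : ∀ y ∈ t, HasDerivAt φ 0 y := by
    intro y hy
    have hy1 : (0:ℝ) < 1 - y := by
      have := hy.2
      simp only [htdef, Set.mem_Ioo] at hy
      linarith [hy.2]
    have hne : ((1:ℂ) - (y:ℝ)) ≠ 0 := by
      rw [show ((1:ℂ) - (y:ℝ)) = ((1 - y : ℝ) : ℂ) by push_cast; ring]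
      exact_mod_cast Complex.ofReal_ne_zero.mpr hy1.ne'
    have hslit : ((1:ℂ) - (y:ℝ)) ∈ Complex.slitPlane := by
      apply Complex.mem_slitPlane_iff.mpr
      left
      simp [hy1]
    have hcpow : HasDerivAt (fun z : ℝ => ((1:ℂ) - (z:ℝ)) ^ a)
        (a * ((1:ℂ) - (y:ℝ)) ^ (a - 1) * (-1)) y := by
      have h1 : HasDerivAt (fun w : ℂ => 1 - w) (-1) ((y:ℝ):ℂ) := by
        simpa using (hasDerivAt_id ((y:ℝ):ℂ)).const_sub 1
      have h2 : HasDerivAt (fun w : ℂ => (1 - w) ^ a)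
          (a * ((1:ℂ) - (y:ℝ)) ^ (a - 1) * (-1)) ((y:ℝ):ℂ) := h1.cpow_const hslit
      exact h2.comp_ofReal
    have hmul := (key y hy).mul hcpow
    have hpow : ((1:ℂ) - (y:ℝ)) ^ a = ((1:ℂ) - (y:ℝ)) ^ (a - 1) * ((1:ℂ) - (y:ℝ)) := by
      rw [show a = (a - 1) + 1 by ring, Complex.cpow_add _ _ hne]
      rw [Complex.cpow_one]
      ring_nf
    have hode := ode y hy
    refine hmul.congr_deriv (Eq.symm ?_)
    rw [hf] at hode ⊢
    linear_combination (-(∑' n, g' n y)) * hpow - (((1:ℂ) - (y:ℝ)) ^ (a - 1)) * hode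
  -- constancy
  have hst : s ∈ t := by
    rcases abs_lt.mp hsr with ⟨h1, h2⟩
    exact ⟨h1, h2⟩
  have hconst : φ s = φ 0 := by
    refine Convex.is_const_of_fderivWithin_eq_zero (convex_Ioo (-r) r)
      (fun y hy => ((hφ y hy).differentiableAt).differentiableWithinAt) (fun y hy => ?_)
      hst h0t
    rw [fderivWithin_of_isOpen ht hy, ((hφ y hy).hasFDerivAt).fderiv]
    ext
    simp
  have hφ0 : φ 0 = 1 := by
    rw [hφdef]
    simp only
    have hf0 : f 0 = 1 := by
      rw [hf]
      simp only
      rw [tsum_eq_single 0 (fun n hn => by simp [hg, zero_pow hn])]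
      simp [hg, hc, poch]
    rw [hf0]
    simp
  have hfs : f s = ((1:ℂ) - (s:ℝ)) ^ (-a) := by
    have h1 : f s * ((1:ℂ) - (s:ℝ)) ^ a = 1 := by
      have := hconst.trans hφ0
      rwa [hφdef] at this
    rw [Complex.cpow_neg]
    exact eq_inv_of_mul_eq_one_left h1
  have hsum := (hsum_c s hsr.le).hasSum
  have heq : (fun n : ℕ => poch a n * ((s:ℝ):ℂ) ^ n / n.factorial) = fun n => g n s := by
    funext n
    simp only [hg, hc]
    ring
  rw [heq]
  have hfs' : ∑' n : ℕ, c n * ((s:ℝ):ℂ) ^ n = ((1:ℂ) - (s:ℝ)) ^ (-a) := hfs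
  exact hfs' ▸ (hsum_c s hsr.le).hasSum

end aux

theorem Fpq_integral_rep (p q : ℝ) (hp : 0 ≤ p) (hq : 0 ≤ q) (a b c : ℂ)
    (hb : 0 < b.re) (hcb : b.re < c.re) (x : ℝ) (hx : |x| < 1) :
    Fpq p q a b c x = (Complex.betaIntegral b (c - b))⁻¹ *
      ∫ t in (0:ℝ)..1, (t:ℂ) ^ (b - 1) * ((1:ℂ) - t) ^ (c - b - 1) *
        ((1:ℂ) - x * t) ^ (-a) * Complex.exp (-p / t - q / (1 - t)) := by
  have hcb0 : 0 < (c - b).re := by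
    rw [Complex.sub_re]; linarith
  set M : ℝ := ‖a‖ + 1 with hM
  have hM0 : 0 < M := by positivity
  set P : ℕ → ℝ := fun n => (ascPochhammer ℝ n).eval M with hP
  have hPpos : ∀ n, 0 < P n := fun n => ascPochhammer_pos n M hM0
  set F : ℕ → ℝ → ℂ := fun n t => Complex.exp (-(p:ℂ) / t - (q:ℂ) / (1 - t)) *
      ((t:ℂ) ^ (b + n - 1) * ((1:ℂ) - t) ^ (c - b - 1)) *
      (poch a n * (x:ℂ) ^ n / n.factorial) with hF
  set I : Set ℝ := Set.Ioc 0 1 with hI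
  -- basic integrability facts
  have hre : ∀ n : ℕ, 0 < (b + (n:ℂ)).re := by
    intro n
    rw [Complex.add_re, Complex.natCast_re]
    positivity
  have hbase : ∀ n : ℕ, IntegrableOn
      (fun t : ℝ => (t:ℂ) ^ (b + n - 1) * ((1:ℂ) - t) ^ (c - b - 1)) I volume := by
    intro n
    exact (intervalIntegrable_iff_integrableOn_Ioc_of_le zero_le_one).mp
      (Complex.betaIntegral_convergent (hre n) hcb0)
  have hbase0 : IntegrableOn
      (fun t : ℝ => (t:ℂ) ^ (b - 1) * ((1:ℂ) - t) ^ (c - b - 1)) I volume :=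
    (intervalIntegrable_iff_integrableOn_Ioc_of_le zero_le_one).mp
      (Complex.betaIntegral_convergent hb hcb0)
  have hexp_meas : AEStronglyMeasurable (fun t : ℝ => Complex.exp (-(p:ℂ) / t - (q:ℂ) / (1 - t)))
      (volume.restrict I) := by
    apply Measurable.aestronglyMeasurable
    fun_prop
  have hexp_bound : ∀ t ∈ I, ‖Complex.exp (-(p:ℂ) / t - (q:ℂ) / (1 - t))‖ ≤ 1 := by
    intro t ht
    have h1 : (-(p:ℂ) / t - (q:ℂ) / (1 - t)) = ((-p / t - q / (1 - t) : ℝ) : ℂ) := by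
      push_cast; ring
    rw [h1, Complex.norm_exp]
    rw [Real.exp_le_one_iff]
    have h2 : -p / t ≤ 0 := by
      rw [neg_div]
      exact neg_nonpos.mpr (div_nonneg hp ht.1.le)
    have h3 : 0 ≤ q / (1 - t) := div_nonneg hq (by linarith [ht.2])
    simp only [Complex.ofReal_re]
    linarith
  have hFint : ∀ n : ℕ, Integrable (F n) (volume.restrict I) := by
    intro n
    apply Integrable.mul_const
    apply Integrable.bdd_mul (c := 1) (hbase n) hexp_meas
    rw [ae_restrict_iff' measurableSet_Ioc]
    exact Eventually.of_forall hexp_bound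
  -- norm bound
  have hFnorm : ∀ n : ℕ, ∀ t ∈ I, ‖F n t‖ ≤
      ‖(t:ℂ) ^ (b - 1) * ((1:ℂ) - t) ^ (c - b - 1)‖ * (P n / n.factorial * |x| ^ n) := by
    intro n t ht
    have ht0 : (0:ℝ) < t := ht.1
    have ht1 : t ≤ 1 := ht.2
    rw [hF]
    simp only [norm_mul, norm_div, Complex.norm_natCast, norm_pow, Complex.norm_real,
      Real.norm_eq_abs]
    have e1 : ‖(t:ℂ) ^ (b + n - 1)‖ ≤ ‖(t:ℂ) ^ (b - 1)‖ := by
      rw [Complex.norm_cpow_eq_rpow_re_of_pos ht0, Complex.norm_cpow_eq_rpow_re_of_pos ht0]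
      have h2 : (b + n - 1).re = (b - 1).re + n := by
        simp [Complex.add_re, Complex.sub_re, Complex.natCast_re]
        ring
      rw [h2, Real.rpow_add ht0, Real.rpow_natCast]
      have h3 : t ^ n ≤ 1 := pow_le_one₀ ht0.le ht1
      nlinarith [Real.rpow_nonneg ht0.le (b - 1).re, pow_nonneg ht0.le n]
    have e2 : ‖poch a n‖ ≤ P n := pochBound a n
    have e3 : ‖Complex.exp (-(p:ℂ) / t - (q:ℂ) / (1 - t))‖ ≤ 1 := hexp_bound t ht
    calc ‖Complex.exp (-(p:ℂ) / t - (q:ℂ) / (1 - t))‖ *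
          (‖(t:ℂ) ^ (b + n - 1)‖ * ‖((1:ℂ) - t) ^ (c - b - 1)‖) *
          (‖poch a n‖ * |x| ^ n / n.factorial)
        ≤ 1 * (‖(t:ℂ) ^ (b - 1)‖ * ‖((1:ℂ) - t) ^ (c - b - 1)‖) *
          (P n * |x| ^ n / n.factorial) := by
          gcongr <;> first
            | exact e1
            | exact e2
            | exact e3
            | positivity
      _ = ‖(t:ℂ) ^ (b - 1)‖ * ‖((1:ℂ) - t) ^ (c - b - 1)‖ * (P n / n.factorial * |x| ^ n) := by
          ring
  -- summability of the integrals of norms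
  set C : ℝ := ∫ t in I, ‖(t:ℂ) ^ (b - 1) * ((1:ℂ) - t) ^ (c - b - 1)‖ with hC
  have hC0 : 0 ≤ C := setIntegral_nonneg measurableSet_Ioc (fun t _ => norm_nonneg _)
  have hInorm : ∀ n : ℕ, (∫ t in I, ‖F n t‖) ≤ C * (P n / n.factorial * |x| ^ n) := by
    intro n
    have h1 : (∫ t in I, ‖F n t‖) ≤
        ∫ t in I, ‖(t:ℂ) ^ (b - 1) * ((1:ℂ) - t) ^ (c - b - 1)‖ * (P n / n.factorial * |x| ^ n) := by
      refine setIntegral_mono_on (hFint n).norm (hbase0.norm.mul_const _) measurableSet_Ioc ?_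
      exact fun t ht => hFnorm n t ht
    rw [integral_mul_const] at h1
    exact h1
  have hsummable : Summable (fun n : ℕ => ∫ t in I, ‖F n t‖) := by
    refine Summable.of_nonneg_of_le
      (fun n => setIntegral_nonneg measurableSet_Ioc (fun t _ => norm_nonneg _))
      (fun n => ?_) ((summable_master hM0 (abs_nonneg x) hx).mul_left C)
    refine (hInorm n).trans ?_
    have h2 : P n / n.factorial * |x| ^ n ≤ ((n:ℝ) + 1) * (P n / n.factorial) * |x| ^ n := by
      have hnn : (0:ℝ) ≤ P n / n.factorial * |x| ^ n := by
        have := (hPpos n).le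
        positivity
      nlinarith
    have := mul_le_mul_of_nonneg_left h2 hC0
    linarith
  -- swap sum and integral
  have hswap : ∑' n : ℕ, (∫ t in I, F n t) = ∫ t in I, ∑' n : ℕ, F n t :=
    integral_tsum_of_summable_integral_norm hFint hsummable
  -- pointwise identity of the sums
  have hpoint : ∀ t ∈ I, ∑' n : ℕ, F n t =
      (t:ℂ) ^ (b - 1) * ((1:ℂ) - t) ^ (c - b - 1) * ((1:ℂ) - x * t) ^ (-a) *
        Complex.exp (-(p:ℂ) / t - (q:ℂ) / (1 - t)) := by
    intro t ht
    have ht0 : (0:ℝ) < t := ht.1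
    have ht0c : ((t:ℝ):ℂ) ≠ 0 := Complex.ofReal_ne_zero.mpr ht0.ne'
    have hxt : |x * t| < 1 := by
      rw [abs_mul]
      calc |x| * |t| ≤ |x| * 1 := by
            gcongr
            rw [abs_of_pos ht0]
            exact ht.2
        _ < 1 := by rwa [mul_one]
    have hsumb := hasSum_one_sub_cpow a hxt
    set K : ℂ := Complex.exp (-(p:ℂ) / t - (q:ℂ) / (1 - t)) *
      ((t:ℂ) ^ (b - 1) * ((1:ℂ) - t) ^ (c - b - 1)) with hK
    have hFK : ∀ n : ℕ, F n t = K * (poch a n * ((x * t : ℝ) : ℂ) ^ n / n.factorial) := by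
      intro n
      rw [hF, hK]
      simp only
      have hsplit : (t:ℂ) ^ (b + n - 1) = (t:ℂ) ^ (b - 1) * (t:ℂ) ^ (n:ℕ) := by
        rw [show b + (n:ℂ) - 1 = (b - 1) + (n:ℂ) by ring, Complex.cpow_add _ _ ht0c,
          Complex.cpow_natCast]
      rw [hsplit]
      push_cast
      ring
    have hsum2 := hsumb.mul_left K
    rw [tsum_congr hFK, hsum2.tsum_eq]
    have hco : ((1:ℂ) - ((x * t : ℝ) : ℂ)) = (1:ℂ) - x * t := by push_cast; ring
    rw [hK, hco]
    ring
  -- identify each term with an integral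
  have hterm2 : ∀ n : ℕ, extBeta p q (b + n) (c - b) * (poch a n * (x:ℂ) ^ n / n.factorial)
      = ∫ t in I, F n t := by
    intro n
    rw [extBeta, ← intervalIntegral.integral_mul_const,
      intervalIntegral.integral_of_le zero_le_one]
    refine setIntegral_congr_fun measurableSet_Ioc (fun t _ => ?_)
    rw [hF]
    simp only
    rw [show b + (n:ℂ) - 1 = b + n - 1 from rfl]
    ring
  -- assemble
  rw [Fpq]
  have hterm1 : ∀ n : ℕ, extBeta p q (b + n) (c - b) / Complex.betaIntegral b (c - b) *
      poch a n * (x:ℂ) ^ n / n.factorial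
      = (Complex.betaIntegral b (c - b))⁻¹ *
        (extBeta p q (b + n) (c - b) * (poch a n * (x:ℂ) ^ n / n.factorial)) := by
    intro n
    ring
  rw [tsum_congr hterm1, tsum_mul_left]
  congr 1
  rw [tsum_congr hterm2, hswap, intervalIntegral.integral_of_le zero_le_one]
  exact setIntegral_congr_fun measurableSet_Ioc hpoint
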